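/- arXiv:0808.3879 — 2 statements merged into one kernel-verified Lean document; each statement's English description precedes it below -/
import Mathlib

section
/- Let a(ξ₁,ξ₂) = ∑_{(j,k)∈S_a} a_{j,k} e^{i(jξ₁ + kξ₂)} and b(ξ₁,ξ₂) = ∑_{(j,k)∈S_b} b_{j,k} e^{i(jξ₁ + kξ₂)} be nonzero trigonometric polynomials on ℝ² with finite frequency sets S_a, S_b ⊆ ℤ² and complex coefficients. Suppose α, β ≥ 2 are integers and a(ξ₁, βξ₂) b(ξ₁, ξ₂) = a(ξ₁, ξ₂) b(αξ₁, ξ₂) for all (ξ₁,ξ₂) ∈ ℝ². Then a_{j,k} = 0 whenever k ≠ 0 and b_{j,k} = 0 whenever j ≠ 0; that is, a(ξ₁,ξ₂) depends only on ξ₁ and b(ξ₁,ξ₂) depends only on ξ₂. -/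
open Complex

noncomputable section

/-- The trigonometric polynomial on `ℝ²` with (finitely supported) coefficients `c`. -/
def trigPoly (c : ℤ × ℤ →₀ ℂ) (ξ₁ ξ₂ : ℝ) : ℂ :=
  c.sum fun p a => a * Complex.exp (Complex.I * ((p.1 : ℂ) * (ξ₁ : ℂ) + (p.2 : ℂ) * (ξ₂ : ℂ)))

namespace TrigAux

/-! ### Analytic part: linear independence of characters -/

/-- The character of `ℝ²` with frequency `p`. -/
def char (p : ℤ × ℤ) : ℝ × ℝ → ℂ := fun x =>
  Complex.exp (Complex.I * ((p.1 : ℂ) * (x.1 : ℂ) + (p.2 : ℂ) * (x.2 : ℂ)))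

lemma char_zero_eq_one (p : ℤ × ℤ) : char p 0 = 1 := by
  simp [char]

lemma char_add (p : ℤ × ℤ) (x y : ℝ × ℝ) : char p (x + y) = char p x * char p y := by
  rw [char, char, char, ← Complex.exp_add]
  congr 1
  simp only [Prod.fst_add, Prod.snd_add]
  push_cast
  ring

/-- `char p` as a monoid hom on `Multiplicative (ℝ × ℝ)`. -/
def mchar (p : ℤ × ℤ) : Multiplicative (ℝ × ℝ) →* ℂ where
  toFun := fun x => char p x.toAdd
  map_one' := char_zero_eq_one p
  map_mul' := fun x y => char_add p x.toAdd y.toAdd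

lemma exp_eq_exp_aux {a b : ℂ} (h : Complex.exp a = Complex.exp b) :
    Complex.exp (a - b) = 1 := by
  rw [Complex.exp_sub, h, div_self (Complex.exp_ne_zero b)]

lemma eq_of_char_eq {p q : ℤ × ℤ} (h : ∀ x : ℝ × ℝ, char p x = char q x) : p = q := by
  have key : ∀ (m n : ℤ), m ≠ n →
      ¬ (∀ ξ : ℝ, Complex.exp (Complex.I * ((m : ℂ) * ξ)) =
          Complex.exp (Complex.I * ((n : ℂ) * ξ))) := by
    intro m n hmn hall
    set d : ℤ := m - n with hd
    have hd0 : (d : ℝ) ≠ 0 := by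
      simp only [hd]
      exact_mod_cast sub_ne_zero.mpr hmn
    have h1 := exp_eq_exp_aux (hall (Real.pi / (d : ℝ)))
    have harg : Complex.I * ((m : ℂ) * ((Real.pi / (d : ℝ) : ℝ) : ℂ))
        - Complex.I * ((n : ℂ) * ((Real.pi / (d : ℝ) : ℝ) : ℂ)) = Real.pi * Complex.I := by
      have hd0' : ((d : ℤ) : ℂ) ≠ 0 := by
        exact_mod_cast fun hh => hd0 (by exact_mod_cast congrArg (Int.cast : ℤ → ℝ) hh)
      have hc : ((Real.pi / (d : ℝ) : ℝ) : ℂ) = (Real.pi : ℂ) / ((d : ℤ) : ℂ) := by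
        push_cast; ring
      have hmn' : (m : ℂ) - n = ((d : ℤ) : ℂ) := by rw [hd]; push_cast; ring
      rw [hc, show Complex.I * ((m : ℂ) * ((Real.pi : ℂ) / ((d : ℤ) : ℂ)))
          - Complex.I * ((n : ℂ) * ((Real.pi : ℂ) / ((d : ℤ) : ℂ)))
          = (((m : ℂ) - n) * ((Real.pi : ℂ) / ((d : ℤ) : ℂ))) * Complex.I from by ring,
        hmn']
      field_simp
    rw [harg, Complex.exp_pi_mul_I] at h1
    norm_num at h1
  refine Prod.ext ?_ ?_
  · by_contra hne
    refine key p.1 q.1 hne (fun ξ => ?_)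
    have := h (ξ, 0)
    simpa [char] using this
  · by_contra hne
    refine key p.2 q.2 hne (fun ξ => ?_)
    have := h (0, ξ)
    simpa [char] using this

lemma mchar_injective : Function.Injective mchar := by
  intro p q hpq
  exact eq_of_char_eq fun x => DFunLike.congr_fun hpq (Multiplicative.ofAdd x)

lemma char_linearIndependent : LinearIndependent ℂ char := by
  have h := (linearIndependent_monoidHom (Multiplicative (ℝ × ℝ)) ℂ).comp mchar mchar_injective
  exact h

/-! ### Bridge: trigPoly as an injective multiplicative map -/

/-- the linear map sending coefficients to the trig polynomial as a function -/
def trigL : (ℤ × ℤ →₀ ℂ) →ₗ[ℂ] (ℝ × ℝ → ℂ) := Finsupp.linearCombination ℂ char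

lemma trigL_apply (c : ℤ × ℤ →₀ ℂ) (x : ℝ × ℝ) :
    trigL c x = trigPoly c x.1 x.2 := by
  rw [trigL, Finsupp.linearCombination_apply, trigPoly, Finsupp.sum, Finsupp.sum,
    Finset.sum_apply]
  rfl

lemma trigL_injective : Function.Injective trigL :=
  char_linearIndependent

/-- `char` as a monoid hom on frequencies, into the function algebra. -/
def charM : Multiplicative (ℤ × ℤ) →* (ℝ × ℝ → ℂ) where
  toFun := fun p => char p.toAdd
  map_one' := by
    funext x
    simp [char]
  map_mul' := fun p q => by
    funext x
    show char (p.toAdd + q.toAdd) x = char p.toAdd x * char q.toAdd x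
    rw [char, char, char, ← Complex.exp_add]
    congr 1
    simp only [Prod.fst_add, Prod.snd_add]
    push_cast
    ring

def Phi : AddMonoidAlgebra ℂ (ℤ × ℤ) →ₐ[ℂ] (ℝ × ℝ → ℂ) :=
  AddMonoidAlgebra.lift ℂ (ℝ × ℝ → ℂ) (ℤ × ℤ) charM

lemma Phi_eq_trigL (c : AddMonoidAlgebra ℂ (ℤ × ℤ)) : Phi c = trigL c.coeff := by
  rw [Phi, AddMonoidAlgebra.lift_apply, trigL, Finsupp.linearCombination_apply]
  rfl

lemma trig_mul (c d : AddMonoidAlgebra ℂ (ℤ × ℤ)) (ξ₁ ξ₂ : ℝ) :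
    trigPoly (c * d).coeff ξ₁ ξ₂ = trigPoly c.coeff ξ₁ ξ₂ * trigPoly d.coeff ξ₁ ξ₂ := by
  have := congrFun (map_mul Phi c d) (ξ₁, ξ₂)
  simp only [Pi.mul_apply, Phi_eq_trigL] at this
  simpa [trigL_apply] using this

lemma trigPoly_eq (c : ℤ × ℤ →₀ ℂ) (ξ₁ ξ₂ : ℝ) :
    trigPoly c ξ₁ ξ₂ = trigL c (ξ₁, ξ₂) := (trigL_apply c (ξ₁, ξ₂)).symm

lemma trig_single (p : ℤ × ℤ) (b : ℂ) (ξ₁ ξ₂ : ℝ) :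
    trigPoly (Finsupp.single p b) ξ₁ ξ₂
      = b * Complex.exp (Complex.I * ((p.1 : ℂ) * (ξ₁ : ℂ) + (p.2 : ℂ) * (ξ₂ : ℂ))) := by
  rw [trigPoly]
  exact Finsupp.sum_single_index (zero_mul _)

lemma trig_mapDomain (s : ℤ × ℤ → ℤ × ℤ) (c : ℤ × ℤ →₀ ℂ) (ξ₁ ξ₂ η₁ η₂ : ℝ)
    (hs : ∀ p : ℤ × ℤ, ((s p).1 : ℂ) * ξ₁ + ((s p).2 : ℂ) * ξ₂
      = (p.1 : ℂ) * η₁ + (p.2 : ℂ) * η₂) :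
    trigPoly (Finsupp.mapDomain s c) ξ₁ ξ₂ = trigPoly c η₁ η₂ := by
  induction c using Finsupp.induction_linear with
  | zero => simp [trigPoly]
  | add f g hf hg =>
      rw [Finsupp.mapDomain_add]
      simp only [trigPoly_eq, map_add, Pi.add_apply] at hf hg ⊢
      rw [hf, hg]
  | single p b =>
      rw [Finsupp.mapDomain_single, trig_single, trig_single, hs p]

/-! ### Algebraic part: lex degrees -/

variable {G : Type*} [AddCommGroup G] [LinearOrder G] [IsOrderedAddMonoid G]

lemma support_nonempty {c : AddMonoidAlgebra ℂ (ℤ × ℤ)} (hc : c ≠ 0) : c.coeff.support.Nonempty :=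
  Finsupp.support_nonempty_iff.mpr (mt AddMonoidAlgebra.coeff_eq_zero.mp hc)

lemma sup'_eq_of_eq {α β : Type*} [SemilatticeSup β] {s t : Finset α} (h : s = t)
    (H : s.Nonempty) (H' : t.Nonempty) (f : α → β) : s.sup' H f = t.sup' H' f := by
  subst h; rfl

/-- key: the sup of an injective additive degree map over the support of a product. -/
lemma sup_support_mul (D : (ℤ × ℤ) →+ G) (hD : Function.Injective D)
    (f g : AddMonoidAlgebra ℂ (ℤ × ℤ)) (hf : f.coeff.support.Nonempty) (hg : g.coeff.support.Nonempty) :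
    ∃ hfg : (f * g).coeff.support.Nonempty,
      (f * g).coeff.support.sup' hfg D = f.coeff.support.sup' hf D + g.coeff.support.sup' hg D := by
  classical
  obtain ⟨a₀, ha₀, hfa⟩ := Finset.exists_mem_eq_sup' hf D
  obtain ⟨b₀, hb₀, hgb⟩ := Finset.exists_mem_eq_sup' hg D
  have hmain : (f * g).coeff (a₀ + b₀) = f.coeff a₀ * g.coeff b₀ := by
    rw [AddMonoidAlgebra.coeff_mul, Finsupp.sum, Finset.sum_eq_single a₀]
    · rw [Finsupp.sum, Finset.sum_eq_single b₀]
      · rw [if_pos rfl]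
      · intro b hb hne
        exact if_neg fun he => hne (add_left_cancel he)
      · intro hb
        rw [Finsupp.notMem_support_iff.mp hb, mul_zero, ite_self]
    · intro a ha hne
      refine Finset.sum_eq_zero fun b hb => if_neg fun he => ?_
      have h1 : D a < D a₀ := by
        refine lt_of_le_of_ne ?_ (fun hE => hne (hD hE))
        rw [← hfa] at *
        exact Finset.le_sup' D ha
      have h2 : D b ≤ D b₀ := by
        rw [← hgb] at *
        exact Finset.le_sup' D hb
      have := add_lt_add_of_lt_of_le h1 h2
      rw [← map_add, ← map_add, he] at this
      exact lt_irrefl _ this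
    · intro ha
      refine Finset.sum_eq_zero fun b _ => ?_
      simp only [Finsupp.notMem_support_iff.mp ha, zero_mul, ite_self]
  have hne : (f * g).coeff (a₀ + b₀) ≠ 0 := by
    rw [hmain]
    exact mul_ne_zero (Finsupp.mem_support_iff.mp ha₀) (Finsupp.mem_support_iff.mp hb₀)
  have hmem : a₀ + b₀ ∈ (f * g).coeff.support := Finsupp.mem_support_iff.mpr hne
  refine ⟨⟨a₀ + b₀, hmem⟩, le_antisymm ?_ ?_⟩
  · refine Finset.sup'_le _ _ fun c hc => ?_
    obtain ⟨a, ha, b, hb, rfl⟩ := Finset.mem_add.mp (AddMonoidAlgebra.support_coeff_mul_subset f g hc)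
    rw [map_add, hfa, hgb]
    exact add_le_add (hfa ▸ Finset.le_sup' D ha) (hgb ▸ Finset.le_sup' D hb)
  · have := Finset.le_sup' D hmem
    rw [map_add] at this
    rwa [hfa, hgb]

/-- sup of degree over the support of a mapDomain. -/
lemma sup_support_mapDomain (D : (ℤ × ℤ) → G) (s : ℤ × ℤ → ℤ × ℤ)
    (hs : Function.Injective s) (φ : G → G) (hφ : Monotone φ)
    (hcomp : ∀ p, D (s p) = φ (D p))
    (f : ℤ × ℤ →₀ ℂ) (hf : f.support.Nonempty) :
    ∃ hsf : (Finsupp.mapDomain s f).support.Nonempty,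
      (Finsupp.mapDomain s f).support.sup' hsf D = φ (f.support.sup' hf D) := by
  classical
  have hsupp : (Finsupp.mapDomain s f).support = f.support.image s :=
    Finsupp.mapDomain_support_of_injective hs f
  have hne : (Finsupp.mapDomain s f).support.Nonempty := by
    rw [hsupp]; exact hf.image s
  refine ⟨hne, ?_⟩
  have h1 : (Finsupp.mapDomain s f).support.sup' hne D
      = (f.support.image s).sup' (hf.image s) D := by
    congr 1
  rw [h1, Finset.sup'_image, Finset.comp_sup'_eq_sup'_comp hf φ (fun a b => hφ.map_sup a b)]
  congr 1
  funext p
  exact hcomp p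

/-- `Finsupp.mapDomain`, typed as a map of `AddMonoidAlgebra`s. -/
abbrev md (s : ℤ × ℤ → ℤ × ℤ) (f : AddMonoidAlgebra ℂ (ℤ × ℤ)) : AddMonoidAlgebra ℂ (ℤ × ℤ) :=
  AddMonoidAlgebra.ofCoeff (Finsupp.mapDomain s f.coeff)

/-- Multiplication in the monoid algebra, with explicit types. -/
abbrev amul (f g : AddMonoidAlgebra ℂ (ℤ × ℤ)) : AddMonoidAlgebra ℂ (ℤ × ℤ) := f * g

lemma md_eq (s : ℤ × ℤ → ℤ × ℤ) (f : AddMonoidAlgebra ℂ (ℤ × ℤ)) :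
    (md s f).coeff = Finsupp.mapDomain s f.coeff := rfl

/-- Master lemma: from the intertwining identity, the extremal degrees satisfy the scaled
balance equation. -/
lemma master (s t : ℤ × ℤ → ℤ × ℤ) (hs : Function.Injective s) (ht : Function.Injective t)
    (ca cb : AddMonoidAlgebra ℂ (ℤ × ℤ)) (hca : ca ≠ 0) (hcb : cb ≠ 0)
    (E : md s ca * cb = ca * md t cb)
    (D : (ℤ × ℤ) →+ G) (hD : Function.Injective D)
    (φ ψ : G → G) (hφ : Monotone φ) (hψ : Monotone ψ)
    (hφs : ∀ p, D (s p) = φ (D p)) (hψt : ∀ p, D (t p) = ψ (D p)) :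
    ∃ Ma Mb : G, (∀ p ∈ ca.coeff.support, D p ≤ Ma) ∧ (∀ p ∈ cb.coeff.support, D p ≤ Mb)
      ∧ φ Ma + Mb = Ma + ψ Mb := by
  have hfa := support_nonempty hca
  have hfb := support_nonempty hcb
  obtain ⟨h1, e1⟩ := sup_support_mapDomain (D : (ℤ × ℤ) → G) s hs φ hφ hφs ca.coeff hfa
  obtain ⟨h2, e2⟩ := sup_support_mapDomain (D : (ℤ × ℤ) → G) t ht ψ hψ hψt cb.coeff hfb
  obtain ⟨h3, e3⟩ := sup_support_mul D hD (md s ca) cb h1 hfb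
  obtain ⟨h4, e4⟩ := sup_support_mul D hD ca (md t cb) hfa h2
  refine ⟨ca.coeff.support.sup' hfa D, cb.coeff.support.sup' hfb D,
    fun p hp => Finset.le_sup' (D : (ℤ × ℤ) → G) hp,
    fun p hp => Finset.le_sup' (D : (ℤ × ℤ) → G) hp, ?_⟩
  have hsupp : (md s ca * cb).coeff.support = (ca * md t cb).coeff.support := by rw [E]
  calc φ (ca.coeff.support.sup' hfa D) + cb.coeff.support.sup' hfb D
      = (md s ca * cb).coeff.support.sup' h3 D := by rw [e3, e1]
    _ = (ca * md t cb).coeff.support.sup' h4 D := sup'_eq_of_eq hsupp h3 h4 _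
    _ = ca.coeff.support.sup' hfa D + ψ (cb.coeff.support.sup' hfb D) := by rw [e4, e2]

/-! ### Lex order helpers -/

lemma mono_first (m : ℤ) (hm : 0 < m) :
    Monotone fun x : ℤ ×ₗ ℤ => toLex (m * (ofLex x).1, (ofLex x).2) := by
  intro x y hxy
  rcases Prod.Lex.le_iff.mp hxy with h | ⟨h1, h2⟩
  · exact Prod.Lex.le_iff.mpr (Or.inl (mul_lt_mul_of_pos_left h hm))
  · exact Prod.Lex.le_iff.mpr (Or.inr ⟨by simp only [ofLex_toLex, h1], h2⟩)

lemma mono_second (m : ℤ) (hm : 0 ≤ m) :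
    Monotone fun x : ℤ ×ₗ ℤ => toLex ((ofLex x).1, m * (ofLex x).2) := by
  intro x y hxy
  rcases Prod.Lex.le_iff.mp hxy with h | ⟨h1, h2⟩
  · exact Prod.Lex.le_iff.mpr (Or.inl h)
  · exact Prod.Lex.le_iff.mpr (Or.inr ⟨h1, mul_le_mul_of_nonneg_left h2 hm⟩)

lemma cancel_scale {m c : ℤ} (hm : 2 ≤ m) (h : m * c = c) : c = 0 := by
  have h' : (m - 1) * c = 0 := by linear_combination h
  rcases mul_eq_zero.mp h' with h'' | h''
  · omega
  · exact h''

lemma le_of_first_zero {x : ℤ × ℤ} {M : ℤ ×ₗ ℤ} (h : toLex x ≤ M) (hM : (ofLex M).1 = 0) :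
    x.1 ≤ 0 := by
  have h0 := Prod.Lex.le_iff.mp h
  rw [ofLex_toLex] at h0
  rcases h0 with h' | ⟨h', -⟩
  · omega
  · omega

/-! ### The scaling maps and the four degree homomorphisms -/

def sMap (b : ℤ) : ℤ × ℤ → ℤ × ℤ := fun p => (p.1, b * p.2)

def tMap (a : ℤ) : ℤ × ℤ → ℤ × ℤ := fun p => (a * p.1, p.2)

lemma sMap_injective {b : ℤ} (hb : b ≠ 0) : Function.Injective (sMap b) := by
  intro p q h
  rw [sMap, sMap, Prod.mk.injEq] at h
  exact Prod.ext h.1 (mul_left_cancel₀ hb h.2)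

lemma tMap_injective {a : ℤ} (ha : a ≠ 0) : Function.Injective (tMap a) := by
  intro p q h
  rw [tMap, tMap, Prod.mk.injEq] at h
  exact Prod.ext (mul_left_cancel₀ ha h.1) h.2

def scaleFst (m : ℤ) : ℤ ×ₗ ℤ → ℤ ×ₗ ℤ := fun x => toLex (m * (ofLex x).1, (ofLex x).2)

def scaleSnd (m : ℤ) : ℤ ×ₗ ℤ → ℤ ×ₗ ℤ := fun x => toLex ((ofLex x).1, m * (ofLex x).2)

lemma mono_scaleFst (m : ℤ) (hm : 0 < m) : Monotone (scaleFst m) := mono_first m hm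

lemma mono_scaleSnd (m : ℤ) (hm : 0 ≤ m) : Monotone (scaleSnd m) := mono_second m hm

def D1 : (ℤ × ℤ) →+ ℤ ×ₗ ℤ := AddMonoidHom.mk' (fun p => toLex (p.2, p.1)) (fun _ _ => rfl)

def D2 : (ℤ × ℤ) →+ ℤ ×ₗ ℤ := AddMonoidHom.mk' (fun p => toLex (-p.2, p.1))
  (fun a b => by
    show toLex (-(a + b).2, (a + b).1) = toLex (((-a.2, a.1) : ℤ × ℤ) + ((-b.2, b.1) : ℤ × ℤ))
    congr 1
    exact Prod.ext (by simp [Prod.fst_add]; ring) rfl)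

def D3 : (ℤ × ℤ) →+ ℤ ×ₗ ℤ := AddMonoidHom.mk' (fun p => toLex (p.1, p.2)) (fun _ _ => rfl)

def D4 : (ℤ × ℤ) →+ ℤ ×ₗ ℤ := AddMonoidHom.mk' (fun p => toLex (-p.1, p.2))
  (fun a b => by
    show toLex (-(a + b).1, (a + b).2) = toLex (((-a.1, a.2) : ℤ × ℤ) + ((-b.1, b.2) : ℤ × ℤ))
    congr 1
    exact Prod.ext (by simp [Prod.fst_add]; ring) rfl)

lemma D1_inj : Function.Injective D1 := by
  intro p q h
  have h' : ((p.2, p.1) : ℤ × ℤ) = (q.2, q.1) := congrArg ofLex h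
  rw [Prod.mk.injEq] at h'
  exact Prod.ext h'.2 h'.1

lemma D2_inj : Function.Injective D2 := by
  intro p q h
  have h' : ((-p.2, p.1) : ℤ × ℤ) = (-q.2, q.1) := congrArg ofLex h
  rw [Prod.mk.injEq] at h'
  exact Prod.ext h'.2 (by omega)

lemma D3_inj : Function.Injective D3 := by
  intro p q h
  have h' : ((p.1, p.2) : ℤ × ℤ) = (q.1, q.2) := congrArg ofLex h
  rw [Prod.mk.injEq] at h'
  exact Prod.ext h'.1 h'.2

lemma D4_inj : Function.Injective D4 := by
  intro p q h
  have h' : ((-p.1, p.2) : ℤ × ℤ) = (-q.1, q.2) := congrArg ofLex h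
  rw [Prod.mk.injEq] at h'
  exact Prod.ext (by omega) h'.2

lemma comp_D1_s (b : ℤ) : ∀ p, D1 (sMap b p) = scaleFst b (D1 p) := fun _ => rfl
lemma comp_D1_t (a : ℤ) : ∀ p, D1 (tMap a p) = scaleSnd a (D1 p) := fun _ => rfl
lemma comp_D2_s (b : ℤ) : ∀ p, D2 (sMap b p) = scaleFst b (D2 p) := fun p => by
  show toLex (-(b * p.2), p.1) = toLex (b * -p.2, p.1)
  congr 1
  exact Prod.ext (by ring) rfl
lemma comp_D2_t (a : ℤ) : ∀ p, D2 (tMap a p) = scaleSnd a (D2 p) := fun _ => rfl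
lemma comp_D3_s (b : ℤ) : ∀ p, D3 (sMap b p) = scaleSnd b (D3 p) := fun _ => rfl
lemma comp_D3_t (a : ℤ) : ∀ p, D3 (tMap a p) = scaleFst a (D3 p) := fun _ => rfl
lemma comp_D4_s (b : ℤ) : ∀ p, D4 (sMap b p) = scaleSnd b (D4 p) := fun _ => rfl
lemma comp_D4_t (a : ℤ) : ∀ p, D4 (tMap a p) = scaleFst a (D4 p) := fun p => by
  show toLex (-(a * p.1), p.2) = toLex (a * -p.1, p.2)
  congr 1
  exact Prod.ext (by ring) rfl

end TrigAux


open TrigAux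

/-- if nonzero trigonometric polynomials `a`, `b` on `ℝ²` satisfy
`a(ξ₁, βξ₂) b(ξ₁, ξ₂) = a(ξ₁, ξ₂) b(αξ₁, ξ₂)` for integers `α, β ≥ 2`, then `a` depends
only on `ξ₁` and `b` depends only on `ξ₂`. -/
theorem trig_poly_intertwining_separation (α β : ℤ) (hα : 2 ≤ α) (hβ : 2 ≤ β)
    (ca cb : ℤ × ℤ →₀ ℂ) (hca : ca ≠ 0) (hcb : cb ≠ 0)
    (h : ∀ ξ₁ ξ₂ : ℝ,
      trigPoly ca ξ₁ ((β : ℝ) * ξ₂) * trigPoly cb ξ₁ ξ₂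
        = trigPoly ca ξ₁ ξ₂ * trigPoly cb ((α : ℝ) * ξ₁) ξ₂) :
    (∀ p : ℤ × ℤ, p.2 ≠ 0 → ca p = 0) ∧ (∀ p : ℤ × ℤ, p.1 ≠ 0 → cb p = 0) := by
  classical
  have hβ0 : β ≠ 0 := by omega
  have hα0 : α ≠ 0 := by omega
  have hβpos : (0 : ℤ) < β := by omega
  have hαpos : (0 : ℤ) < α := by omega
  -- the identity of coefficient systems
  have E : amul (md (sMap β) (AddMonoidAlgebra.ofCoeff ca)) (AddMonoidAlgebra.ofCoeff cb)
      = amul (AddMonoidAlgebra.ofCoeff ca) (md (tMap α) (AddMonoidAlgebra.ofCoeff cb)) := by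
    apply AddMonoidAlgebra.coeff_injective
    apply trigL_injective
    funext x
    rw [trigL_apply, trigL_apply, trig_mul, trig_mul, md_eq, md_eq,
      AddMonoidAlgebra.coeff_ofCoeff, AddMonoidAlgebra.coeff_ofCoeff,
      trig_mapDomain (sMap β) ca x.1 x.2 x.1 ((β : ℝ) * x.2)
        (fun p => by simp only [sMap]; push_cast; ring),
      trig_mapDomain (tMap α) cb x.1 x.2 ((α : ℝ) * x.1) x.2
        (fun p => by simp only [tMap]; push_cast; ring)]
    exact h x.1 x.2
  -- bounds on supports
  have hA1 : ∀ p ∈ ca.support, p.2 ≤ 0 := by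
    obtain ⟨Ma, Mb, hMa, -, heq⟩ := master (sMap β) (tMap α) (sMap_injective hβ0)
      (tMap_injective hα0) (AddMonoidAlgebra.ofCoeff ca) (AddMonoidAlgebra.ofCoeff cb)
      (mt AddMonoidAlgebra.ofCoeff_eq_zero.mp hca) (mt AddMonoidAlgebra.ofCoeff_eq_zero.mp hcb) E D1 D1_inj (scaleFst β) (scaleSnd α)
      (mono_scaleFst β hβpos) (mono_scaleSnd α (le_of_lt hαpos)) (comp_D1_s β) (comp_D1_t α)
    have h1 : β * (ofLex Ma).1 + (ofLex Mb).1 = (ofLex Ma).1 + (ofLex Mb).1 :=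
      congrArg (fun x : ℤ ×ₗ ℤ => (ofLex x).1) heq
    have hMa1 : (ofLex Ma).1 = 0 := cancel_scale hβ (add_right_cancel h1)
    exact fun p hp => le_of_first_zero (x := (p.2, p.1)) (hMa p hp) hMa1
  have hA2 : ∀ p ∈ ca.support, -p.2 ≤ 0 := by
    obtain ⟨Ma, Mb, hMa, -, heq⟩ := master (sMap β) (tMap α) (sMap_injective hβ0)
      (tMap_injective hα0) (AddMonoidAlgebra.ofCoeff ca) (AddMonoidAlgebra.ofCoeff cb)
      (mt AddMonoidAlgebra.ofCoeff_eq_zero.mp hca) (mt AddMonoidAlgebra.ofCoeff_eq_zero.mp hcb) E D2 D2_inj (scaleFst β) (scaleSnd α)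
      (mono_scaleFst β hβpos) (mono_scaleSnd α (le_of_lt hαpos)) (comp_D2_s β) (comp_D2_t α)
    have h1 : β * (ofLex Ma).1 + (ofLex Mb).1 = (ofLex Ma).1 + (ofLex Mb).1 :=
      congrArg (fun x : ℤ ×ₗ ℤ => (ofLex x).1) heq
    have hMa1 : (ofLex Ma).1 = 0 := cancel_scale hβ (add_right_cancel h1)
    exact fun p hp => le_of_first_zero (x := (-p.2, p.1)) (hMa p hp) hMa1
  have hB1 : ∀ p ∈ cb.support, p.1 ≤ 0 := by
    obtain ⟨Ma, Mb, -, hMb, heq⟩ := master (sMap β) (tMap α) (sMap_injective hβ0)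
      (tMap_injective hα0) (AddMonoidAlgebra.ofCoeff ca) (AddMonoidAlgebra.ofCoeff cb)
      (mt AddMonoidAlgebra.ofCoeff_eq_zero.mp hca) (mt AddMonoidAlgebra.ofCoeff_eq_zero.mp hcb) E D3 D3_inj (scaleSnd β) (scaleFst α)
      (mono_scaleSnd β (le_of_lt hβpos)) (mono_scaleFst α hαpos) (comp_D3_s β) (comp_D3_t α)
    have h1 : (ofLex Ma).1 + (ofLex Mb).1 = (ofLex Ma).1 + α * (ofLex Mb).1 :=
      congrArg (fun x : ℤ ×ₗ ℤ => (ofLex x).1) heq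
    have hMb1 : (ofLex Mb).1 = 0 := cancel_scale hα (add_left_cancel h1).symm
    exact fun p hp => le_of_first_zero (x := (p.1, p.2)) (hMb p hp) hMb1
  have hB2 : ∀ p ∈ cb.support, -p.1 ≤ 0 := by
    obtain ⟨Ma, Mb, -, hMb, heq⟩ := master (sMap β) (tMap α) (sMap_injective hβ0)
      (tMap_injective hα0) (AddMonoidAlgebra.ofCoeff ca) (AddMonoidAlgebra.ofCoeff cb)
      (mt AddMonoidAlgebra.ofCoeff_eq_zero.mp hca) (mt AddMonoidAlgebra.ofCoeff_eq_zero.mp hcb) E D4 D4_inj (scaleSnd β) (scaleFst α)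
      (mono_scaleSnd β (le_of_lt hβpos)) (mono_scaleFst α hαpos) (comp_D4_s β) (comp_D4_t α)
    have h1 : (ofLex Ma).1 + (ofLex Mb).1 = (ofLex Ma).1 + α * (ofLex Mb).1 :=
      congrArg (fun x : ℤ ×ₗ ℤ => (ofLex x).1) heq
    have hMb1 : (ofLex Mb).1 = 0 := cancel_scale hα (add_left_cancel h1).symm
    exact fun p hp => le_of_first_zero (x := (-p.1, p.2)) (hMb p hp) hMb1
  constructor
  · intro p hp2
    by_contra hne
    have hp := Finsupp.mem_support_iff.mpr hne
    have := hA1 p hp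
    have := hA2 p hp
    omega
  · intro p hp1
    by_contra hne
    have hp := Finsupp.mem_support_iff.mpr hne
    have := hB1 p hp
    have := hB2 p hp
    omega

end
end

section
/- Let T be a symmetric invertible d×d integer matrix with t = |det T|, and let d₀, d₁, …, d_{t−1} ∈ ℤ^d be a complete set of representatives of the cosets of Tℤ^d in ℤ^d. Then the t×t complex matrix M with entries M_{j,k} = t^{−1/2} e^{−2πi ⟨T^{−1} d_k, d_j⟩}, 0 ≤ j, k ≤ t−1, is unitary. -/
open Complex

noncomputable section

/-- `dvec` is a complete set of representatives of the cosets of `Tℤ^d` in `ℤ^d`. -/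
def IsCompleteCosetReps {d t : ℕ} (T : Matrix (Fin d) (Fin d) ℤ)
    (dvec : Fin t → Fin d → ℤ) : Prop :=
  ∀ k : Fin d → ℤ, ∃! i : Fin t, ∃ m : Fin d → ℤ, k = dvec i + T.mulVec m

set_option maxHeartbeats 1000000 in
/-- for a symmetric invertible integer matrix `T` with `t = |det T|` and a
complete set of coset representatives `d₀, …, d_{t−1}` of `Tℤ^d` in `ℤ^d`, the `t × t`
matrix with entries `t^{-1/2} e^{-2πi⟨T⁻¹ d_k, d_j⟩}` is unitary. -/
theorem coset_character_matrix_unitary (d : ℕ) (T : Matrix (Fin d) (Fin d) ℤ)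
    (hsymm : T.transpose = T) (hdet : T.det ≠ 0)
    (dvec : Fin T.det.natAbs → Fin d → ℤ)
    (hreps : IsCompleteCosetReps T dvec)
    (M : Matrix (Fin T.det.natAbs) (Fin T.det.natAbs) ℂ)
    (hM : ∀ j k, M j k = ((1 / Real.sqrt T.det.natAbs : ℝ) : ℂ) *
      Complex.exp (-(2 * (Real.pi : ℂ) * Complex.I) *
        ((∑ i, ((T.map (Int.cast : ℤ → ℝ))⁻¹.mulVec (fun i' => (dvec k i' : ℝ))) i *
          (dvec j i : ℝ) : ℝ) : ℂ))) :
    M * M.conjTranspose = 1 ∧ M.conjTranspose * M = 1 := by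
  classical
  have htpos : 0 < T.det.natAbs := Int.natAbs_pos.mpr hdet
  let Tr : Matrix (Fin d) (Fin d) ℝ := T.map (Int.cast : ℤ → ℝ)
  have hTrdet : Tr.det ≠ 0 := by
    have h : Tr.det = ((T.det : ℤ) : ℝ) := (RingHom.map_det (Int.castRingHom ℝ) T).symm
    rw [h]
    exact_mod_cast hdet
  have hTrunit : IsUnit Tr.det := isUnit_iff_ne_zero.mpr hTrdet
  have hTrsymm : Tr.transpose = Tr := by
    show (T.map _).transpose = T.map _
    rw [← Matrix.transpose_map, hsymm]
  have hinvsymm : (Tr⁻¹).transpose = Tr⁻¹ := by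
    rw [Matrix.transpose_nonsing_inv, hTrsymm]
  have hleft : Tr⁻¹ * Tr = 1 := Matrix.nonsing_inv_mul Tr hTrunit
  have hright : Tr * Tr⁻¹ = 1 := Matrix.mul_nonsing_inv Tr hTrunit
  let cv : (Fin d → ℤ) → (Fin d → ℝ) := fun u i => (u i : ℝ)
  have cv_mulVec : ∀ (m : Fin d → ℤ), cv (T.mulVec m) = Tr.mulVec (cv m) := by
    intro m
    funext i
    simp only [cv, Matrix.mulVec, dotProduct, Tr, Matrix.map_apply]
    push_cast
    ring
  let ip : (Fin d → ℤ) → (Fin d → ℤ) → ℝ := fun u v => ∑ i, (Tr⁻¹.mulVec (cv u)) i * (cv v) i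
  have ip_eq_dot : ∀ u v, ip u v = dotProduct (Tr⁻¹.mulVec (cv u)) (cv v) := by
    intro u v; rfl
  have hM' : ∀ j k, M j k = ((1 / Real.sqrt T.det.natAbs : ℝ) : ℂ) *
      Complex.exp (-(2 * (Real.pi : ℂ) * Complex.I) * ((ip (dvec k) (dvec j) : ℝ) : ℂ)) := by
    intro j k; exact hM j k
  have ip_symm : ∀ u v, ip u v = ip v u := by
    intro u v
    rw [ip_eq_dot, ip_eq_dot]
    rw [dotProduct_comm]
    rw [Matrix.dotProduct_mulVec]
    rw [← Matrix.mulVec_transpose, hinvsymm]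
  have ip_sub_left : ∀ u w v, ip (u - w) v = ip u v - ip w v := by
    intro u w v
    have hcv : cv (u - w) = cv u - cv w := by
      funext i; simp only [cv, Pi.sub_apply]; push_cast; ring
    simp only [ip, hcv, Matrix.mulVec_sub, Pi.sub_apply, sub_mul, Finset.sum_sub_distrib]
  have ip_add_right : ∀ x a b, ip x (a + b) = ip x a + ip x b := by
    intro x a b
    have hcv : cv (a + b) = cv a + cv b := by
      funext i; simp only [cv, Pi.add_apply]; push_cast; ring
    simp only [ip, hcv, Pi.add_apply, mul_add, Finset.sum_add_distrib]
  have ip_T : ∀ x m, ip x (T.mulVec m) = ((∑ i, x i * m i : ℤ) : ℝ) := by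
    intro x m
    rw [ip_eq_dot, cv_mulVec]
    rw [Matrix.dotProduct_mulVec]
    rw [← Matrix.mulVec_transpose, hTrsymm, Matrix.mulVec_mulVec, hright, Matrix.one_mulVec]
    simp only [dotProduct, cv]
    push_cast
    ring
  -- main entrywise computation
  have key : ∀ j l : Fin T.det.natAbs,
      (M * M.conjTranspose) j l = if j = l then 1 else 0 := by
    intro j l
    set x : Fin d → ℤ := dvec j - dvec l with hx
    set χ : (Fin d → ℤ) → ℂ := fun v =>
      Complex.exp (-(2 * (Real.pi : ℂ) * Complex.I) * ((ip x v : ℝ) : ℂ)) with hχ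
    have χ_add : ∀ a b, χ (a + b) = χ a * χ b := by
      intro a b
      simp only [hχ, ip_add_right, ← Complex.exp_add]
      congr 1
      push_cast
      ring
    have χ_T : ∀ m, χ (T.mulVec m) = 1 := by
      intro m
      simp only [hχ, ip_T]
      have h : -(2 * (Real.pi : ℂ) * Complex.I) * (((∑ i, x i * m i : ℤ) : ℝ) : ℂ)
          = ((-(∑ i, x i * m i) : ℤ) : ℂ) * (2 * (Real.pi : ℂ) * Complex.I) := by
        push_cast; ring
      rw [h, Complex.exp_int_mul_two_pi_mul_I]
    set S : ℂ := ∑ k, χ (dvec k) with hSdef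
    have hshift : ∀ y : Fin d → ℤ, χ y * S = S := by
      intro y
      set σ : Fin T.det.natAbs → Fin T.det.natAbs := fun k => (hreps (dvec k + y)).choose with hσ
      have hσspec : ∀ k, ∃ m, dvec k + y = dvec (σ k) + T.mulVec m := fun k =>
        (hreps (dvec k + y)).choose_spec.1
      have hσinj : Function.Injective σ := by
        intro k k' hkk
        obtain ⟨m, hm⟩ := hσspec k
        obtain ⟨m', hm'⟩ := hσspec k'
        have heq : dvec k = dvec k' + T.mulVec (m - m') := by
          have h1 : dvec k + y = dvec (σ k') + T.mulVec m := by rw [← hkk]; exact hm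
          rw [Matrix.mulVec_sub]
          funext i
          have e1 := congrFun h1 i
          have e2 := congrFun hm' i
          simp only [Pi.add_apply, Pi.sub_apply] at e1 e2 ⊢
          omega
        have hpk : ∃ m0, dvec k = dvec k + T.mulVec m0 := ⟨0, by simp⟩
        have hpk' : ∃ m0, dvec k = dvec k' + T.mulVec m0 := ⟨m - m', heq⟩
        exact ((hreps (dvec k)).unique hpk hpk').symm ▸ rfl
      have hbij : Function.Bijective σ := Finite.injective_iff_bijective.mp hσinj
      have hχσ : ∀ k, χ (dvec (σ k)) = χ (dvec k) * χ y := by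
        intro k
        obtain ⟨m, hm⟩ := hσspec k
        have h1 : χ (dvec k + y) = χ (dvec (σ k) + T.mulVec m) := by rw [← hm]
        rw [χ_add, χ_add, χ_T, mul_one] at h1
        exact h1.symm
      calc χ y * S = ∑ k, χ (dvec k) * χ y := by
            rw [hSdef, Finset.mul_sum]; exact Finset.sum_congr rfl fun k _ => mul_comm _ _
        _ = ∑ k, χ (dvec (σ k)) := by simp_rw [hχσ]
        _ = S := by rw [hSdef]; exact hbij.sum_comp (fun i => χ (dvec i))
    -- entry computation
    have coef : ((1 / Real.sqrt T.det.natAbs : ℝ) : ℂ) * ((1 / Real.sqrt T.det.natAbs : ℝ) : ℂ)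
        = ((1 / (T.det.natAbs : ℝ) : ℝ) : ℂ) := by
      rw [← Complex.ofReal_mul]
      congr 1
      rw [div_mul_div_comm, one_mul, Real.mul_self_sqrt (by positivity)]
    have hterm : ∀ k, M j k * star (M l k) = ((1 / (T.det.natAbs : ℝ) : ℝ) : ℂ) * χ (dvec k) := by
      intro k
      have hab : ip (dvec k) (dvec j) - ip (dvec k) (dvec l) = ip x (dvec k) := by
        rw [ip_symm (dvec k) (dvec j), ip_symm (dvec k) (dvec l), ← ip_sub_left]
      have hse : star (Complex.exp (-(2 * (Real.pi : ℂ) * Complex.I) *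
            ((ip (dvec k) (dvec l) : ℝ) : ℂ)))
          = Complex.exp ((2 * (Real.pi : ℂ) * Complex.I) * ((ip (dvec k) (dvec l) : ℝ) : ℂ)) := by
        rw [show star (Complex.exp (-(2 * (Real.pi : ℂ) * Complex.I) *
            ((ip (dvec k) (dvec l) : ℝ) : ℂ))) = (starRingEnd ℂ) (Complex.exp (-(2 * (Real.pi : ℂ) * Complex.I) *
            ((ip (dvec k) (dvec l) : ℝ) : ℂ))) from rfl, ← Complex.exp_conj]
        congr 1
        simp only [map_mul, map_neg, Complex.conj_I, Complex.conj_ofReal, map_ofNat]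
        ring
      rw [hM' j k, hM' l k, star_mul', hse,
        show star (((1 / Real.sqrt T.det.natAbs : ℝ)) : ℂ) = (starRingEnd ℂ) (((1 / Real.sqrt T.det.natAbs : ℝ)) : ℂ) from rfl,
        Complex.conj_ofReal]
      calc ((1 / Real.sqrt T.det.natAbs : ℝ) : ℂ) *
            Complex.exp (-(2 * (Real.pi : ℂ) * Complex.I) * ((ip (dvec k) (dvec j) : ℝ) : ℂ)) *
            (((1 / Real.sqrt T.det.natAbs : ℝ) : ℂ) *
            Complex.exp ((2 * (Real.pi : ℂ) * Complex.I) * ((ip (dvec k) (dvec l) : ℝ) : ℂ)))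
          = (((1 / Real.sqrt T.det.natAbs : ℝ) : ℂ) * ((1 / Real.sqrt T.det.natAbs : ℝ) : ℂ)) *
            (Complex.exp (-(2 * (Real.pi : ℂ) * Complex.I) * ((ip (dvec k) (dvec j) : ℝ) : ℂ)) *
             Complex.exp ((2 * (Real.pi : ℂ) * Complex.I) * ((ip (dvec k) (dvec l) : ℝ) : ℂ))) := by
            ring
        _ = ((1 / (T.det.natAbs : ℝ) : ℝ) : ℂ) * χ (dvec k) := by
            rw [coef, ← Complex.exp_add]
            congr 1
            rw [hχ]
            simp only
            rw [← hab]
            push_cast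
            ring_nf
    have hentry : (M * M.conjTranspose) j l = ((1 / (T.det.natAbs : ℝ) : ℝ) : ℂ) * S := by
      rw [Matrix.mul_apply]
      simp only [Matrix.conjTranspose_apply]
      rw [hSdef, Finset.mul_sum]
      exact Finset.sum_congr rfl fun k _ => hterm k
    rw [hentry]
    by_cases hjl : j = l
    · subst hjl
      simp only [if_pos rfl]
      have hx0 : x = 0 := sub_self _
      have hχ1 : ∀ k, χ (dvec k) = 1 := by
        intro k
        rw [hχ]
        simp only
        have hip0 : ip x (dvec k) = 0 := by
          have hcv0 : cv x = 0 := by rw [hx0]; funext i; simp [cv]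
          simp [ip, hcv0, Matrix.mulVec_zero]
        rw [hip0]
        simp
      have hSn : S = (T.det.natAbs : ℂ) := by
        rw [hSdef]
        simp [hχ1]
      rw [hSn]
      have hn0 : ((T.det.natAbs : ℝ)) ≠ 0 := by positivity
      push_cast
      rw [one_div, inv_mul_eq_div, div_self]
      exact_mod_cast hn0
    · simp only [if_neg hjl]
      suffices hS0 : S = 0 by rw [hS0, mul_zero]
      by_contra hS0
      have hχy : ∀ y, χ y = 1 := by
        intro y
        have h1 : χ y * S = 1 * S := by rw [hshift y, one_mul]
        exact mul_right_cancel₀ hS0 h1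
      have hint : ∀ i : Fin d, ∃ c : ℤ, (Tr⁻¹.mulVec (cv x)) i = (c : ℝ) := by
        intro i
        have h1 := hχy (Pi.single i 1)
        have hr : ip x (Pi.single i 1) = (Tr⁻¹.mulVec (cv x)) i := by
          simp only [ip]
          have hcvs : ∀ i', (cv (Pi.single i 1)) i' = if i' = i then (1:ℝ) else 0 := by
            intro i'
            simp [cv, Pi.single_apply]
          simp_rw [hcvs]
          simp [Finset.sum_ite_eq']
        rw [hχ] at h1
        simp only at h1
        rw [hr] at h1
        rw [Complex.exp_eq_one_iff] at h1
        obtain ⟨c, hc⟩ := h1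
        refine ⟨-c, ?_⟩
        have h2πI : (2 * (Real.pi : ℂ) * Complex.I) ≠ 0 := by
          simp [Real.pi_ne_zero, Complex.I_ne_zero]
        have h2 : (((Tr⁻¹.mulVec (cv x)) i : ℝ) : ℂ) * (2 * (Real.pi : ℂ) * Complex.I)
            = ((-c : ℤ) : ℂ) * (2 * (Real.pi : ℂ) * Complex.I) := by
          push_cast
          linear_combination -hc
        have h3 := mul_right_cancel₀ h2πI h2
        exact_mod_cast h3
      choose m hm using hint
      have hTm : T.mulVec m = x := by
        have h2 : cv m = Tr⁻¹.mulVec (cv x) := by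
          funext i; exact (hm i).symm
        have h1 : Tr.mulVec (cv m) = cv x := by
          rw [h2, Matrix.mulVec_mulVec, hright, Matrix.one_mulVec]
        funext i
        have h3 := congrFun h1 i
        rw [← cv_mulVec] at h3
        simp only [cv] at h3
        exact_mod_cast h3
      have hcontr : j = l := by
        have hpj : ∃ m0, dvec j = dvec j + T.mulVec m0 := ⟨0, by simp⟩
        have hpl : ∃ m0, dvec j = dvec l + T.mulVec m0 := by
          refine ⟨m, ?_⟩
          rw [hTm, hx]
          funext i
          simp only [Pi.add_apply, Pi.sub_apply]
          ring
        exact (hreps (dvec j)).unique hpj hpl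
      exact hjl hcontr
  have h1 : M * M.conjTranspose = 1 := by
    ext j l
    rw [key j l, Matrix.one_apply]
  exact ⟨h1, mul_eq_one_comm.mp h1⟩

end
end
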